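/- Assume v² − 4f²m_l² > 0 and M₂²·(1 + h²/(2f²)) − M² > 0. Set K := (v² − 4f²m_l²)·M₂² / (8f⁴·(M₂²·(1 + h²/(2f²)) − M²)) (so K > 0). Then the parity-preserving point P′ = (l = l′ = √K, δ = δ′ = −v/(4f²), δbar = δbar′ = −f·M·K/M₂²) is a critical point of V₁ (all six partial derivatives of V₁ vanish at P′), and the value of the potential there is V₁(P′) = −2·(f²·(1 − M²/M₂²) + h²/2)·K². -/

import Mathlib

lemma d4aux (a b c p : ℝ) : deriv (fun x : ℝ => a * x ^ 4 + b * x ^ 2 + c) p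
    = 4 * a * p ^ 3 + 2 * b * p := by
  have h : HasDerivAt (fun x : ℝ => a * x ^ 4 + b * x ^ 2 + c)
      (a * (4 * p ^ 3) + b * (2 * p ^ 1) + 0) p := by
    have h1 := (hasDerivAt_pow 4 p).const_mul a
    have h2 := (hasDerivAt_pow 2 p).const_mul b
    simpa using (h1.add h2).add_const c
  rw [h.deriv]; ring

lemma d2aux (a b c p : ℝ) : deriv (fun x : ℝ => a * x ^ 2 + b * x + c) p
    = 2 * a * p + b := by
  have h : HasDerivAt (fun x : ℝ => a * x ^ 2 + b * x + c)
      (a * (2 * p ^ 1) + b) p := by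
    have h1 := (hasDerivAt_pow 2 p).const_mul a
    simpa using (h1.add ((hasDerivAt_id p).const_mul b)).add_const c
  rw [h.deriv]; ring

/-- The simplified tree-level Higgs potential of the minimal SUSY left-right model in
the limit of small gauge and bidoublet couplings, with all fields real:
`V₁(l, l', δ, δ', δbar, δbar') = m_l²(l'² + l²) + M₂²(δbar'² + δbar²) + f²(l'⁴ + l⁴)
 + 4f²(l'²δ'² + l²δ²) + h²l'²l² + 2v(l'²δ' + l²δ) + 2fM(l'²δbar' + l²δbar)`. -/
noncomputable def V1 (mlsq M2 f M v h : ℝ) (l l' δ δ' δbar δbar' : ℝ) : ℝ :=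
  mlsq * (l' ^ 2 + l ^ 2) + M2 ^ 2 * (δbar' ^ 2 + δbar ^ 2) + f ^ 2 * (l' ^ 4 + l ^ 4)
  + 4 * f ^ 2 * (l' ^ 2 * δ' ^ 2 + l ^ 2 * δ ^ 2) + h ^ 2 * l' ^ 2 * l ^ 2
  + 2 * v * (l' ^ 2 * δ' + l ^ 2 * δ) + 2 * f * M * (l' ^ 2 * δbar' + l ^ 2 * δbar)
/-- The parity-preserving solution: under `v² − 4f²m_l² > 0` and
`M₂²(1 + h²/(2f²)) − M² > 0`, with
`K = (v² − 4f²m_l²)M₂²/(8f⁴(M₂²(1 + h²/(2f²)) − M²))`, the point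
`(l, l', δ, δ', δbar, δbar') = (√K, √K, −v/(4f²), −v/(4f²), −fMK/M₂², −fMK/M₂²)` is a
critical point of `V₁` and `V₁ = −2(f²(1 − M²/M₂²) + h²/2)K²` there. -/
theorem parity_preserving_solution (mlsq M2 f M v h K : ℝ)
    (hf : f ≠ 0) (hM2 : 0 < M2)
    (hpos : 0 < v ^ 2 - 4 * f ^ 2 * mlsq)
    (hMM : 0 < M2 ^ 2 * (1 + h ^ 2 / (2 * f ^ 2)) - M ^ 2)
    (hK : K = (v ^ 2 - 4 * f ^ 2 * mlsq) * M2 ^ 2 /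
      (8 * f ^ 4 * (M2 ^ 2 * (1 + h ^ 2 / (2 * f ^ 2)) - M ^ 2))) :
    0 < K ∧
    deriv (fun x => V1 mlsq M2 f M v h x (Real.sqrt K) (-v / (4 * f ^ 2))
      (-v / (4 * f ^ 2)) (-f * M * K / M2 ^ 2) (-f * M * K / M2 ^ 2)) (Real.sqrt K) = 0 ∧
    deriv (fun x => V1 mlsq M2 f M v h (Real.sqrt K) x (-v / (4 * f ^ 2))
      (-v / (4 * f ^ 2)) (-f * M * K / M2 ^ 2) (-f * M * K / M2 ^ 2)) (Real.sqrt K) = 0 ∧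
    deriv (fun x => V1 mlsq M2 f M v h (Real.sqrt K) (Real.sqrt K) x
      (-v / (4 * f ^ 2)) (-f * M * K / M2 ^ 2) (-f * M * K / M2 ^ 2))
      (-v / (4 * f ^ 2)) = 0 ∧
    deriv (fun x => V1 mlsq M2 f M v h (Real.sqrt K) (Real.sqrt K) (-v / (4 * f ^ 2))
      x (-f * M * K / M2 ^ 2) (-f * M * K / M2 ^ 2)) (-v / (4 * f ^ 2)) = 0 ∧
    deriv (fun x => V1 mlsq M2 f M v h (Real.sqrt K) (Real.sqrt K) (-v / (4 * f ^ 2))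
      (-v / (4 * f ^ 2)) x (-f * M * K / M2 ^ 2)) (-f * M * K / M2 ^ 2) = 0 ∧
    deriv (fun x => V1 mlsq M2 f M v h (Real.sqrt K) (Real.sqrt K) (-v / (4 * f ^ 2))
      (-v / (4 * f ^ 2)) (-f * M * K / M2 ^ 2) x) (-f * M * K / M2 ^ 2) = 0 ∧
    V1 mlsq M2 f M v h (Real.sqrt K) (Real.sqrt K) (-v / (4 * f ^ 2))
      (-v / (4 * f ^ 2)) (-f * M * K / M2 ^ 2) (-f * M * K / M2 ^ 2)
      = -2 * (f ^ 2 * (1 - M ^ 2 / M2 ^ 2) + h ^ 2 / 2) * K ^ 2 := by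
  have hf2 : (f : ℝ) ^ 2 ≠ 0 := pow_ne_zero 2 hf
  have hM2' : (M2 : ℝ) ^ 2 ≠ 0 := pow_ne_zero 2 hM2.ne'
  have hden : M2 ^ 2 * (1 + h ^ 2 / (2 * f ^ 2)) - M ^ 2 ≠ 0 := hMM.ne'
  have hf4 : (0:ℝ) < f ^ 4 := by positivity
  have hKpos : 0 < K := by
    rw [hK]
    exact div_pos (mul_pos hpos (pow_pos hM2 2))
      (mul_pos (by positivity) hMM)
  set s := Real.sqrt K with hs_def
  set δ₀ : ℝ := -v / (4 * f ^ 2) with hδ₀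
  set b₀ : ℝ := -f * M * K / M2 ^ 2 with hb₀
  have hs : s ^ 2 = K := Real.sq_sqrt hKpos.le
  have hs4 : s ^ 4 = K ^ 2 := by
    rw [show s ^ 4 = (s ^ 2) ^ 2 by ring, hs]
  have hden2 : M2 ^ 2 * (2 * f ^ 2 + h ^ 2) - 2 * f ^ 2 * M ^ 2 ≠ 0 := by
    have e : M2 ^ 2 * (2 * f ^ 2 + h ^ 2) - 2 * f ^ 2 * M ^ 2
        = 2 * f ^ 2 * (M2 ^ 2 * (1 + h ^ 2 / (2 * f ^ 2)) - M ^ 2) := by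
      field_simp
    rw [e]; exact mul_ne_zero (by positivity) hden
  have hK2 : K * (8 * f ^ 4 * M2 ^ 2 + 4 * f ^ 2 * h ^ 2 * M2 ^ 2 - 8 * f ^ 4 * M ^ 2)
      = (v ^ 2 - 4 * f ^ 2 * mlsq) * M2 ^ 2 := by
    rw [hK]; field_simp
    have hD : M2 ^ 2 * f ^ 2 * 2 + M2 ^ 2 * h ^ 2 - f ^ 2 * M ^ 2 * 2 ≠ 0 := by
      intro h0; apply hden2; linear_combination h0
    field_simp; ring
  have key : mlsq + 4 * f ^ 2 * δ₀ ^ 2 + h ^ 2 * K + 2 * v * δ₀ + 2 * f * M * b₀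
      + 2 * f ^ 2 * K = 0 := by
    rw [hδ₀, hb₀]
    field_simp
    linear_combination hK2
  refine ⟨hKpos, ?_, ?_, ?_, ?_, ?_, ?_, ?_⟩
  · have e : (fun x => V1 mlsq M2 f M v h x s δ₀ δ₀ b₀ b₀)
        = fun x : ℝ => f ^ 2 * x ^ 4
          + (mlsq + 4 * f ^ 2 * δ₀ ^ 2 + h ^ 2 * s ^ 2 + 2 * v * δ₀ + 2 * f * M * b₀) * x ^ 2
          + (mlsq * s ^ 2 + 2 * M2 ^ 2 * b₀ ^ 2 + f ^ 2 * s ^ 4 + 4 * f ^ 2 * s ^ 2 * δ₀ ^ 2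
              + 2 * v * s ^ 2 * δ₀ + 2 * f * M * s ^ 2 * b₀) := by
      funext x; simp only [V1]; ring
    rw [e, d4aux]
    linear_combination 2 * s * key + (2 * h ^ 2 * s + 4 * f ^ 2 * s) * hs
  · have e : (fun x => V1 mlsq M2 f M v h s x δ₀ δ₀ b₀ b₀)
        = fun x : ℝ => f ^ 2 * x ^ 4
          + (mlsq + 4 * f ^ 2 * δ₀ ^ 2 + h ^ 2 * s ^ 2 + 2 * v * δ₀ + 2 * f * M * b₀) * x ^ 2
          + (mlsq * s ^ 2 + 2 * M2 ^ 2 * b₀ ^ 2 + f ^ 2 * s ^ 4 + 4 * f ^ 2 * s ^ 2 * δ₀ ^ 2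
              + 2 * v * s ^ 2 * δ₀ + 2 * f * M * s ^ 2 * b₀) := by
      funext x; simp only [V1]; ring
    rw [e, d4aux]
    linear_combination 2 * s * key + (2 * h ^ 2 * s + 4 * f ^ 2 * s) * hs
  · have e : (fun x => V1 mlsq M2 f M v h s s x δ₀ b₀ b₀)
        = fun x : ℝ => (4 * f ^ 2 * s ^ 2) * x ^ 2 + (2 * v * s ^ 2) * x
          + (2 * mlsq * s ^ 2 + 2 * M2 ^ 2 * b₀ ^ 2 + 2 * f ^ 2 * s ^ 4
              + 4 * f ^ 2 * s ^ 2 * δ₀ ^ 2 + h ^ 2 * s ^ 4 + 2 * v * s ^ 2 * δ₀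
              + 4 * f * M * s ^ 2 * b₀) := by
      funext x; simp only [V1]; ring
    rw [e, d2aux, hδ₀]
    field_simp
    ring
  · have e : (fun x => V1 mlsq M2 f M v h s s δ₀ x b₀ b₀)
        = fun x : ℝ => (4 * f ^ 2 * s ^ 2) * x ^ 2 + (2 * v * s ^ 2) * x
          + (2 * mlsq * s ^ 2 + 2 * M2 ^ 2 * b₀ ^ 2 + 2 * f ^ 2 * s ^ 4
              + 4 * f ^ 2 * s ^ 2 * δ₀ ^ 2 + h ^ 2 * s ^ 4 + 2 * v * s ^ 2 * δ₀
              + 4 * f * M * s ^ 2 * b₀) := by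
      funext x; simp only [V1]; ring
    rw [e, d2aux, hδ₀]
    field_simp
    ring
  · have e : (fun x => V1 mlsq M2 f M v h s s δ₀ δ₀ x b₀)
        = fun x : ℝ => M2 ^ 2 * x ^ 2 + (2 * f * M * s ^ 2) * x
          + (2 * mlsq * s ^ 2 + M2 ^ 2 * b₀ ^ 2 + 2 * f ^ 2 * s ^ 4
              + 8 * f ^ 2 * s ^ 2 * δ₀ ^ 2 + h ^ 2 * s ^ 4 + 4 * v * s ^ 2 * δ₀
              + 2 * f * M * s ^ 2 * b₀) := by
      funext x; simp only [V1]; ring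
    rw [e, d2aux, hb₀, hs]
    field_simp
    ring
  · have e : (fun x => V1 mlsq M2 f M v h s s δ₀ δ₀ b₀ x)
        = fun x : ℝ => M2 ^ 2 * x ^ 2 + (2 * f * M * s ^ 2) * x
          + (2 * mlsq * s ^ 2 + M2 ^ 2 * b₀ ^ 2 + 2 * f ^ 2 * s ^ 4
              + 8 * f ^ 2 * s ^ 2 * δ₀ ^ 2 + h ^ 2 * s ^ 4 + 4 * v * s ^ 2 * δ₀
              + 2 * f * M * s ^ 2 * b₀) := by
      funext x; simp only [V1]; ring
    rw [e, d2aux, hb₀, hs]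
    field_simp
    ring
  · simp only [V1, hs4, hs]
    rw [hb₀]
    have hb2 : M2 ^ 2 * ((-f * M * K / M2 ^ 2) ^ 2 + (-f * M * K / M2 ^ 2) ^ 2)
        = 2 * f ^ 2 * M ^ 2 * K ^ 2 / M2 ^ 2 := by
      field_simp; ring
    linear_combination 2 * K * key + hb2 - (2 * f * M * K / M2 ^ 2) * hb₀
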